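/- If f : ℝⁿ → ℝ is a convex nonnegative function with f(0) = 0, then ∫_{ℝⁿ} e^{-f(w)} dw ≤ C_n · |{w : f(w) ≤ 1}|, where C_n = 1 + Σ_{j=1}^∞ e^{-j}(j+1)ⁿ. -/

import Mathlib

open MeasureTheory Pointwise

theorem stmt2 (n : ℕ) (f : (Fin n → ℝ) → ℝ)
    (hconv : ConvexOn ℝ Set.univ f) (hf0 : f 0 = 0) (hnn : ∀ w, 0 ≤ f w) :
    ∫⁻ w, ENNReal.ofReal (Real.exp (-(f w)))
      ≤ ENNReal.ofReal (1 + ∑' j : ℕ, Real.exp (-((j : ℝ) + 1)) * ((j : ℝ) + 2) ^ n)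
          * volume {w : Fin n → ℝ | f w ≤ 1} := by
  have hcont : Continuous f :=
    continuousOn_univ.1 (hconv.continuousOn isOpen_univ)
  set S : ℕ → Set (Fin n → ℝ) := fun j => {w | f w ≤ (j : ℝ) + 1} with hS
  have hSmeas : ∀ j, MeasurableSet (S j) := fun j =>
    (isClosed_le hcont continuous_const).measurableSet
  have hSmono : Monotone S := by
    intro i j hij w hw
    have hij' : (i : ℝ) ≤ (j : ℝ) := Nat.cast_le.2 hij
    simp only [hS, Set.mem_setOf_eq] at hw ⊢
    linarith
  have hSunion : ⋃ j, S j = Set.univ := by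
    ext w; simp only [Set.mem_iUnion, Set.mem_univ, iff_true]
    refine ⟨⌈f w⌉₊, ?_⟩
    simp only [hS, Set.mem_setOf_eq]
    linarith [Nat.le_ceil (f w)]
  have hS0 : S 0 = {w : Fin n → ℝ | f w ≤ 1} := by simp [hS]
  -- scaling estimate
  have hscale : ∀ t : ℝ, 1 ≤ t →
      volume {w : Fin n → ℝ | f w ≤ t}
        ≤ ENNReal.ofReal (t ^ n) * volume {w : Fin n → ℝ | f w ≤ 1} := by
    intro t ht
    have ht0 : (0:ℝ) < t := lt_of_lt_of_le one_pos ht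
    have hsub : {w : Fin n → ℝ | f w ≤ t} ⊆ t • {w : Fin n → ℝ | f w ≤ 1} := by
      intro w hw
      refine ⟨t⁻¹ • w, ?_, smul_inv_smul₀ ht0.ne' w⟩
      have hc : (0:ℝ) ≤ t⁻¹ := by positivity
      have hc1 : (0:ℝ) ≤ 1 - t⁻¹ := by
        have : t⁻¹ ≤ 1 := inv_le_one_of_one_le₀ ht
        linarith
      have hcx := hconv.2 (Set.mem_univ w) (Set.mem_univ 0) hc hc1 (by ring)
      simp only [smul_zero, add_zero, hf0, mul_zero] at hcx
      have : f (t⁻¹ • w) ≤ t⁻¹ * f w := by simpa using hcx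
      have h2 : t⁻¹ * f w ≤ t⁻¹ * t := mul_le_mul_of_nonneg_left hw hc
      have h3 : t⁻¹ * t = 1 := inv_mul_cancel₀ ht0.ne'
      exact Set.mem_setOf_eq ▸ by linarith
    calc volume {w : Fin n → ℝ | f w ≤ t}
        ≤ volume (t • {w : Fin n → ℝ | f w ≤ 1}) := measure_mono hsub
      _ = ENNReal.ofReal (t ^ n) * volume {w : Fin n → ℝ | f w ≤ 1} := by
          rw [Measure.addHaar_smul]
          congr 2
          rw [Module.finrank_fin_fun, abs_of_nonneg (by positivity)]
  have hscale' : ∀ j : ℕ, volume (S (j + 1))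
      ≤ ENNReal.ofReal (((j:ℝ) + 2) ^ n) * volume (S 0) := by
    intro j
    have h1 : S (j + 1) = {w : Fin n → ℝ | f w ≤ (j:ℝ) + 2} := by
      ext w
      simp only [hS, Set.mem_setOf_eq]
      push_cast
      constructor <;> intro <;> linarith
    have hj0 : (0:ℝ) ≤ (j:ℝ) := Nat.cast_nonneg j
    have := hscale ((j:ℝ) + 2) (by linarith)
    rw [h1, hS0]
    exact this
  -- summability
  have hsum : Summable (fun j : ℕ => Real.exp (-((j : ℝ) + 1)) * ((j : ℝ) + 2) ^ n) := by
    have h1 : Summable (fun j : ℕ => ((j:ℝ)) ^ n * (Real.exp (-1)) ^ j) :=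
      summable_pow_mul_geometric_of_norm_lt_one n
        (by rw [Real.norm_eq_abs, abs_of_pos (Real.exp_pos _)]
            exact Real.exp_lt_one_iff.2 (by norm_num))
    have h2 : Summable (fun j : ℕ => ((j:ℝ) + 2) ^ n * (Real.exp (-1)) ^ (j + 2)) := by
      have h3 := h1.comp_injective (add_left_injective 2)
      apply h3.congr
      intro j
      simp only [Function.comp]
      push_cast
      ring
    apply (h2.mul_left (Real.exp 1)).congr
    intro j
    have hp : (Real.exp (-1 : ℝ)) ^ (j + 2) = Real.exp (-((j:ℝ) + 2)) := by
      rw [← Real.exp_nat_mul]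
      congr 1
      push_cast
      ring
    rw [hp, show Real.exp (-((j:ℝ) + 1)) = Real.exp 1 * Real.exp (-((j:ℝ) + 2)) by
      rw [← Real.exp_add]; congr 1; ring]
    ring
  have hann : ∀ j : ℕ, 0 ≤ Real.exp (-((j : ℝ) + 1)) * ((j : ℝ) + 2) ^ n :=
    fun j => by positivity
  -- decomposition of the integral
  have hdmeas : ∀ j, MeasurableSet (disjointed S j) := MeasurableSet.disjointed hSmeas
  have key : ∫⁻ w, ENNReal.ofReal (Real.exp (-(f w)))
      = ∑' j, ∫⁻ w in disjointed S j, ENNReal.ofReal (Real.exp (-(f w))) := by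
    rw [← setLIntegral_univ, ← hSunion, ← iUnion_disjointed,
      lintegral_iUnion hdmeas (disjoint_disjointed S)]
  -- bound for the first piece
  have h0 : ∫⁻ w in disjointed S 0, ENNReal.ofReal (Real.exp (-(f w))) ≤ volume (S 0) := by
    calc ∫⁻ w in disjointed S 0, ENNReal.ofReal (Real.exp (-(f w)))
        ≤ ∫⁻ _ in disjointed S 0, 1 := by
          apply setLIntegral_mono measurable_const
          intro w _
          refine ENNReal.ofReal_le_one.2 (Real.exp_le_one_iff.2 (by linarith [hnn w]))
      _ = volume (disjointed S 0) := by rw [setLIntegral_const, one_mul]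
      _ ≤ volume (S 0) := measure_mono (disjointed_subset _ _)
  -- bound for the other pieces
  have h1 : ∀ j : ℕ, ∫⁻ w in disjointed S (j + 1), ENNReal.ofReal (Real.exp (-(f w)))
      ≤ ENNReal.ofReal (Real.exp (-((j : ℝ) + 1)) * ((j : ℝ) + 2) ^ n) * volume (S 0) := by
    intro j
    calc ∫⁻ w in disjointed S (j + 1), ENNReal.ofReal (Real.exp (-(f w)))
        ≤ ∫⁻ _ in disjointed S (j + 1), ENNReal.ofReal (Real.exp (-((j : ℝ) + 1))) := by
          apply setLIntegral_mono measurable_const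
          intro w hw
          rw [hSmono.disjointed_add_one] at hw
          have : ¬ f w ≤ (j : ℝ) + 1 := hw.2
          exact ENNReal.ofReal_le_ofReal (Real.exp_le_exp.2 (by linarith [not_le.1 this]))
      _ = ENNReal.ofReal (Real.exp (-((j : ℝ) + 1))) * volume (disjointed S (j + 1)) :=
          setLIntegral_const _ _
      _ ≤ ENNReal.ofReal (Real.exp (-((j : ℝ) + 1)))
            * (ENNReal.ofReal (((j:ℝ) + 2) ^ n) * volume (S 0)) := by
          gcongr
          exact le_trans (measure_mono (disjointed_subset _ _)) (hscale' j)
      _ = ENNReal.ofReal (Real.exp (-((j : ℝ) + 1)) * ((j : ℝ) + 2) ^ n) * volume (S 0) := by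
          rw [← mul_assoc, ← ENNReal.ofReal_mul (Real.exp_pos _).le]
  -- put everything together
  calc ∫⁻ w, ENNReal.ofReal (Real.exp (-(f w)))
      = ∑' j, ∫⁻ w in disjointed S j, ENNReal.ofReal (Real.exp (-(f w))) := key
    _ = (∫⁻ w in disjointed S 0, ENNReal.ofReal (Real.exp (-(f w))))
          + ∑' j, ∫⁻ w in disjointed S (j + 1), ENNReal.ofReal (Real.exp (-(f w))) :=
        tsum_eq_zero_add' ENNReal.summable
    _ ≤ volume (S 0) + ∑' j : ℕ,
          ENNReal.ofReal (Real.exp (-((j : ℝ) + 1)) * ((j : ℝ) + 2) ^ n) * volume (S 0) := by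
        exact add_le_add h0 (ENNReal.tsum_le_tsum fun j => h1 j)
    _ = (1 + ∑' j : ℕ, ENNReal.ofReal (Real.exp (-((j : ℝ) + 1)) * ((j : ℝ) + 2) ^ n))
          * volume (S 0) := by
        rw [ENNReal.tsum_mul_right, add_mul, one_mul]
    _ = ENNReal.ofReal (1 + ∑' j : ℕ, Real.exp (-((j : ℝ) + 1)) * ((j : ℝ) + 2) ^ n)
          * volume {w : Fin n → ℝ | f w ≤ 1} := by
        rw [hS0, ENNReal.ofReal_add zero_le_one (tsum_nonneg hann), ENNReal.ofReal_one,
          ENNReal.ofReal_tsum_of_nonneg hann hsum]
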